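/- Let ⊢⊣, →, ⤳ be relations on a set A such that ⊢⊣ is symmetric, ⤳ ⊆ ⊢⊣, and → ∘ ⤳* is well-founded. Let ⇒ = → ∪ ⤳ and let ⇐ be the inverse of ⇒. Suppose (i) ← ∘ → ⊆ ⇒* ∘ ⊢⊣= ∘ ⇐*, and (ii) ⊢⊣ ∘ → ⊆ → ∘ ⇒* ∘ ⊢⊣= ∘ ⇐*. Then → is Church-Rosser modulo ⊢⊣*. -/

import Mathlib

open Relation Function

namespace CRMAux


variable {α : Type*}

/-- One-step Dershowitz–Manna multiset order: remove one element, add smaller ones. -/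
def MLT (r : α → α → Prop) (N M : Multiset α) : Prop :=
  ∃ x K M', M = x ::ₘ M' ∧ N = K + M' ∧ ∀ y ∈ K, r y x

theorem addcons (s t : Multiset α) (x : α) : s + (x ::ₘ t) = x ::ₘ (s + t) := by
  rw [← Multiset.singleton_add, ← Multiset.singleton_add, add_left_comm]

theorem mlt_cons {r : α → α → Prop} {N M : Multiset α} (x : α) (h : MLT r N M) :
    MLT r (x ::ₘ N) (x ::ₘ M) := by
  obtain ⟨z, K, M', rfl, rfl, hK⟩ := h
  exact ⟨z, K, x ::ₘ M', Multiset.cons_swap _ _ _, (addcons K M' x).symm, hK⟩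

theorem rtg_mlt_cons {r : α → α → Prop} {N M : Multiset α} (x : α)
    (h : ReflTransGen (MLT r) N M) :
    ReflTransGen (MLT r) (x ::ₘ N) (x ::ₘ M) :=
  h.lift (x ::ₘ ·) (fun _ _ h => mlt_cons x h)

theorem mlt_wf {r : α → α → Prop} (hr : WellFounded r) : WellFounded (MLT r) := by
  have key : ∀ a : α, ∀ M, Acc (MLT r) M → Acc (MLT r) (a ::ₘ M) := by
    intro a
    induction hr.apply a with
    | intro a _ iha =>
      intro M hM
      induction hM with
      | intro M hMacc ihM =>
        constructor
        rintro N ⟨x, K, M', hM', rfl, hK⟩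
        rcases Multiset.cons_eq_cons.mp hM' with ⟨rfl, rfl⟩ | ⟨hne, u, rfl, rfl⟩
        · have : ∀ K' : Multiset α, (∀ y ∈ K', r y a) → Acc (MLT r) (K' + M) := by
            intro K'
            induction K' using Multiset.induction_on with
            | empty => intro _; simpa using Acc.intro M hMacc
            | cons y K'' ih =>
              intro hy
              rw [Multiset.cons_add]
              exact iha y (hy y (Multiset.mem_cons_self _ _)) _
                (ih fun z hz => hy z (Multiset.mem_cons_of_mem hz))
          exact this K hK
        · have h1 : MLT r (K + u) (x ::ₘ u) := ⟨x, K, u, rfl, rfl, hK⟩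
          have h2 := ihM (K + u) h1
          rwa [addcons]
  constructor
  intro M
  induction M using Multiset.induction_on with
  | empty =>
    constructor
    rintro N ⟨x, K, M', hM', _, _⟩
    exact absurd hM'.symm (Multiset.cons_ne_zero)
  | cons a M ih => exact key a M ih

theorem mlt_dm {r : α → α → Prop} :
    ∀ (X : Multiset α), X ≠ 0 → ∀ Y Z : Multiset α,
      (∀ y ∈ Y, ∃ x ∈ X, r y x) → TransGen (MLT r) (Y + Z) (X + Z) := by
  intro X
  induction X using Multiset.induction_on with
  | empty => intro h; exact absurd rfl h
  | cons x X' ih =>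
    intro _ Y Z hY
    classical
    by_cases hX' : X' = 0
    · subst hX'
      refine TransGen.single ⟨x, Y, Z, ?_, rfl, ?_⟩
      · rw [Multiset.cons_add]; simp
      · intro y hy
        obtain ⟨x0, hx0, hr⟩ := hY y hy
        simp only [Multiset.mem_cons, Multiset.notMem_zero, or_false] at hx0
        subst hx0; exact hr
    · set Y1 := Y.filter (fun y => r y x) with hY1
      set Y2 := Y.filter (fun y => ¬ r y x) with hY2
      have step1 : MLT r (Y + Z) (x ::ₘ (Y2 + Z)) := by
        refine ⟨x, Y1, Y2 + Z, rfl, ?_, ?_⟩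
        · rw [← add_assoc, hY1, hY2, Multiset.filter_add_not]
        · intro y hy; rw [hY1] at hy; exact (Multiset.mem_filter.mp hy).2
      have step2 : TransGen (MLT r) (Y2 + (x ::ₘ Z)) (X' + (x ::ₘ Z)) := by
        refine ih hX' Y2 (x ::ₘ Z) ?_
        intro y hy
        have hyY : y ∈ Y := (Multiset.mem_filter.mp hy).1
        have hny : ¬ r y x := (Multiset.mem_filter.mp hy).2
        obtain ⟨x0, hx0, hr⟩ := hY y hyY
        rcases Multiset.mem_cons.mp hx0 with rfl | hx0'
        · exact absurd hr hny
        · exact ⟨x0, hx0', hr⟩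
      have e1 : x ::ₘ (Y2 + Z) = Y2 + (x ::ₘ Z) := (addcons _ _ _).symm
      have e2 : X' + (x ::ₘ Z) = (x ::ₘ X') + Z := by
        rw [addcons, Multiset.cons_add]
      rw [e1] at step1
      rw [e2] at step2
      exact TransGen.head step1 step2



variable {A : Type*}

/-- `LT0 ar lead x y` : `x` is strictly below `y` w.r.t. `(ar ∘ lead*)⁺`. -/
def LT0 (ar lead : A → A → Prop) : A → A → Prop :=
  fun x y => TransGen (Relation.Comp ar (ReflTransGen lead)) y x

/-- Base order on `A × Bool`. -/
def BLT (ar lead : A → A → Prop) : A × Bool → A × Bool → Prop :=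
  Prod.Lex (LT0 ar lead) (fun i j => i = false ∧ j = true)

theorem lt0_wf (ar lead : A → A → Prop)
    (hwf : ¬ ∃ f : ℕ → A, ∀ n,
      Relation.Comp ar (Relation.ReflTransGen lead) (f n) (f (n + 1))) :
    WellFounded (LT0 ar lead) := by
  set R := Relation.Comp ar (Relation.ReflTransGen lead) with hR
  have h1 : WellFounded (swap R) := by
    by_contra hnot
    obtain ⟨x0, hx0⟩ : ∃ x, ¬ Acc (swap R) x := by
      by_contra h; push_neg at h; exact hnot ⟨h⟩
    have step : ∀ x, ¬ Acc (swap R) x → ∃ y, R x y ∧ ¬ Acc (swap R) y := by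
      intro x hx
      by_contra h; push_neg at h
      exact hx (Acc.intro x fun y hy => h y hy)
    let g : ℕ → {x // ¬ Acc (swap R) x} := fun n =>
      Nat.rec ⟨x0, hx0⟩
        (fun _ p => ⟨(step p.1 p.2).choose, (step p.1 p.2).choose_spec.2⟩) n
    exact hwf ⟨fun n => (g n).1, fun n => (step (g n).1 (g n).2).choose_spec.1⟩
  have h2 := h1.transGen
  have he : LT0 ar lead = TransGen (swap R) := by
    funext x y
    exact propext (Relation.transGen_swap (r := R) (a := x) (b := y)).symm
  rwa [he]

theorem bltB_wf : WellFounded (fun i j : Bool => i = false ∧ j = true) := by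
  have hf : Acc (fun i j : Bool => i = false ∧ j = true) false :=
    Acc.intro false (fun c h => absurd h.2 (by simp))
  have ht : Acc (fun i j : Bool => i = false ∧ j = true) true :=
    Acc.intro true (fun c h => by rw [h.1]; exact hf)
  constructor
  intro b
  cases b
  · exact hf
  · exact ht

theorem blt_wf (ar lead : A → A → Prop)
    (hwf : ¬ ∃ f : ℕ → A, ∀ n,
      Relation.Comp ar (Relation.ReflTransGen lead) (f n) (f (n + 1))) :
    WellFounded (BLT ar lead) :=
  WellFounded.prod_lex (lt0_wf ar lead hwf) bltB_wf

theorem blt_fst {ar lead : A → A → Prop} {x y : A} {i j : Bool}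
    (h : LT0 ar lead x y) : BLT ar lead (x, i) (y, j) :=
  Prod.Lex.left _ _ h

theorem blt_snd {ar lead : A → A → Prop} {x : A} :
    BLT ar lead (x, false) (x, true) :=
  Prod.Lex.right _ ⟨rfl, rfl⟩

theorem tg_absorb {ar lead : A → A → Prop} {c m p : A}
    (h : TransGen (Relation.Comp ar (ReflTransGen lead)) c m) (hl : lead m p) :
    TransGen (Relation.Comp ar (ReflTransGen lead)) c p := by
  induction h with
  | single h' =>
    obtain ⟨b, hb, hbl⟩ := h'
    exact TransGen.single ⟨b, hb, hbl.tail hl⟩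
  | tail h1 h2 ih =>
    obtain ⟨b, hb, hbl⟩ := h2
    exact TransGen.tail h1 ⟨b, hb, hbl.tail hl⟩

/-- anything reachable by `ar ∘ (ar ∪ lead)*` is strictly below. -/
theorem below {ar lead : A → A → Prop} {c q p : A}
    (h1 : ar c q) (h2 : ReflTransGen (fun x y => ar x y ∨ lead x y) q p) :
    LT0 ar lead p c := by
  induction h2 with
  | refl => exact TransGen.single ⟨q, h1, ReflTransGen.refl⟩
  | @tail m p' hqm hstep ih =>
    rcases hstep with har | hld
    · exact TransGen.tail ih ⟨p', har, ReflTransGen.refl⟩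
    · exact tg_absorb ih hld



variable {A : Type*}

/-- A conversion between `a` and `b`: a sequence of forward `ar` steps,
backward `ar` steps, and `hd` steps. -/
inductive Conv (ar hd : A → A → Prop) : A → A → Type _ where
  | nil (a : A) : Conv ar hd a a
  | consF {a c b : A} (h : ar a c) (t : Conv ar hd c b) : Conv ar hd a b
  | consB {a c b : A} (h : ar c a) (t : Conv ar hd c b) : Conv ar hd a b
  | consE {a c b : A} (h : hd a c) (t : Conv ar hd c b) : Conv ar hd a b

namespace Conv

variable {ar hd : A → A → Prop}

def mu : ∀ {a b : A}, Conv ar hd a b → Multiset (A × Bool)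
  | _, _, .nil _ => 0
  | _, _, .consF (a := a) _ t => (a, false) ::ₘ t.mu
  | _, _, .consB (c := c) _ t => (c, false) ::ₘ t.mu
  | _, _, .consE (a := a) (c := c) _ t => (a, true) ::ₘ (c, true) ::ₘ t.mu

def append : ∀ {a b c : A}, Conv ar hd a b → Conv ar hd b c → Conv ar hd a c
  | _, _, _, .nil _, D => D
  | _, _, _, .consF h t, D => .consF h (t.append D)
  | _, _, _, .consB h t, D => .consB h (t.append D)
  | _, _, _, .consE h t, D => .consE h (t.append D)

theorem mu_append : ∀ {a b c : A} (C : Conv ar hd a b) (D : Conv ar hd b c),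
    (C.append D).mu = C.mu + D.mu := by
  intro a b c C D
  induction C with
  | nil => simp [mu, append]
  | consF h t ih => simp [mu, append, ih]
  | consB h t ih => simp [mu, append, ih]
  | consE h t ih => simp [mu, append, ih]

def allB : ∀ {a b : A}, Conv ar hd a b → Prop
  | _, _, .nil _ => True
  | _, _, .consB _ t => t.allB
  | _, _, .consF _ _ => False
  | _, _, .consE _ _ => False

def isEB : ∀ {a b : A}, Conv ar hd a b → Prop
  | _, _, .nil _ => True
  | _, _, .consB _ t => t.allB
  | _, _, .consE _ t => t.isEB
  | _, _, .consF _ _ => False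

def valley : ∀ {a b : A}, Conv ar hd a b → Prop
  | _, _, .nil _ => True
  | _, _, .consF _ t => t.valley
  | _, _, .consB _ t => t.allB
  | _, _, .consE _ t => t.isEB

theorem allB_spec : ∀ {a b : A} (C : Conv ar hd a b), C.allB → ReflTransGen ar b a := by
  intro a b C
  induction C with
  | nil => intro _; exact .refl
  | consF h t ih => intro hh; exact absurd hh id
  | consB h t ih => intro hh; exact (ih hh).tail h
  | consE h t ih => intro hh; exact absurd hh id

theorem isEB_spec : ∀ {a b : A} (C : Conv ar hd a b), C.isEB →
    ∃ v, ReflTransGen hd a v ∧ ReflTransGen ar b v := by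
  intro a b C
  induction C with
  | nil a => intro _; exact ⟨a, .refl, .refl⟩
  | consF h t ih => intro hh; exact absurd hh id
  | consB h t ih => intro hh; exact ⟨_, .refl, (allB_spec t hh).tail h⟩
  | consE h t ih =>
    intro hh
    obtain ⟨v, h1, h2⟩ := ih hh
    exact ⟨v, h1.head h, h2⟩

theorem valley_spec : ∀ {a b : A} (C : Conv ar hd a b), C.valley →
    ∃ u v, ReflTransGen ar a u ∧ ReflTransGen hd u v ∧ ReflTransGen ar b v := by
  intro a b C
  induction C with
  | nil a => intro _; exact ⟨a, a, .refl, .refl, .refl⟩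
  | consF h t ih =>
    intro hh
    obtain ⟨u, v, h1, h2, h3⟩ := ih hh
    exact ⟨u, v, h1.head h, h2, h3⟩
  | consB h t ih => intro hh; exact ⟨_, _, .refl, .refl, (allB_spec t hh).tail h⟩
  | consE h t ih =>
    intro hh
    obtain ⟨v, h1, h2⟩ := isEB_spec t hh
    exact ⟨_, v, .refl, h1.head h, h2⟩

end Conv

section Builders

variable {ar hd lead : A → A → Prop}

/-- forward conversion along `(ar ∪ lead)*`; every measure entry lies on the path. -/
theorem ofFwd (hsub : ∀ a b, lead a b → hd a b) {a b : A} (h : ReflTransGen (fun x y => ar x y ∨ lead x y) a b) :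
    ∃ C : Conv ar hd a b, ∀ p ∈ C.mu,
      ReflTransGen (fun x y => ar x y ∨ lead x y) a p.1 := by
  induction h with
  | refl => exact ⟨.nil a, by simp [Conv.mu]⟩
  | @tail m b' h1 h2 ih =>
    obtain ⟨C, hC⟩ := ih
    rcases h2 with har | hld
    · refine ⟨C.append (.consF har (.nil b')), ?_⟩
      intro p hp
      rw [Conv.mu_append] at hp
      rcases Multiset.mem_add.mp hp with hp | hp
      · exact hC p hp
      · simp [Conv.mu] at hp
        rw [hp]
        exact h1
    · refine ⟨C.append (.consE (hsub _ _ hld) (.nil b')), ?_⟩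
      intro p hp
      rw [Conv.mu_append] at hp
      rcases Multiset.mem_add.mp hp with hp | hp
      · exact hC p hp
      · simp [Conv.mu] at hp
        rcases hp with hp | hp <;> rw [hp]
        · exact h1
        · exact h1.tail (Or.inr hld)

/-- backward conversion: from `(ar ∪ lead)* c v` build a conversion from `v` to `c`. -/
theorem ofBwd (hsym : ∀ a b, hd a b → hd b a) (hsub : ∀ a b, lead a b → hd a b) {c v : A} (h : ReflTransGen (fun x y => ar x y ∨ lead x y) c v) :
    ∃ C : Conv ar hd v c, ∀ p ∈ C.mu,
      ReflTransGen (fun x y => ar x y ∨ lead x y) c p.1 := by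
  induction h with
  | refl => exact ⟨.nil c, by simp [Conv.mu]⟩
  | @tail m v' h1 h2 ih =>
    obtain ⟨C, hC⟩ := ih
    rcases h2 with har | hld
    · refine ⟨.consB har C, ?_⟩
      intro p hp
      simp only [Conv.mu, Multiset.mem_cons] at hp
      rcases hp with hp | hp
      · rw [hp]; exact h1
      · exact hC p hp
    · refine ⟨.consE (hsym _ _ (hsub _ _ hld)) C, ?_⟩
      intro p hp
      simp only [Conv.mu, Multiset.mem_cons] at hp
      rcases hp with hp | hp | hp
      · rw [hp]; exact h1.tail (Or.inr hld)
      · rw [hp]; exact h1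
      · exact hC p hp

/-- conversion realizing a single `ReflGen hd` step. -/
theorem ofE {u v : A} (h : ReflGen hd u v) :
    ∃ C : Conv ar hd u v, ∀ p ∈ C.mu, p.1 = u ∨ p.1 = v := by
  cases h with
  | refl => exact ⟨.nil u, by simp [Conv.mu]⟩
  | single h' =>
    refine ⟨.consE h' (.nil v), ?_⟩
    intro p hp
    simp [Conv.mu] at hp
    rcases hp with hp | hp
    · exact Or.inl (by rw [hp])
    · exact Or.inr (by rw [hp])

/-- reversed single `ReflGen hd` step. -/
theorem ofErev (hsym : ∀ a b, hd a b → hd b a) {u v : A} (h : ReflGen hd u v) :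
    ∃ C : Conv ar hd v u, ∀ p ∈ C.mu, p.1 = u ∨ p.1 = v := by
  cases h with
  | refl => exact ⟨.nil u, by simp [Conv.mu]⟩
  | single h' =>
    refine ⟨.consE (hsym _ _ h') (.nil u), ?_⟩
    intro p hp
    simp [Conv.mu] at hp
    rcases hp with hp | hp
    · exact Or.inr (by rw [hp])
    · exact Or.inl (by rw [hp])

theorem ofMixed {a b : A}
    (h : ReflTransGen (fun x y => ar x y ∨ ar y x ∨ hd x y) a b) :
    Nonempty (Conv ar hd a b) := by
  induction h with
  | refl => exact ⟨.nil a⟩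
  | @tail m b' h1 h2 ih =>
    obtain ⟨C⟩ := ih
    rcases h2 with h2 | h2 | h2
    · exact ⟨C.append (.consF h2 (.nil b'))⟩
    · exact ⟨C.append (.consB h2 (.nil b'))⟩
    · exact ⟨C.append (.consE h2 (.nil b'))⟩

end Builders


section Main

variable {ar hd lead : A → A → Prop}

theorem main
    (hsym : ∀ a b, hd a b → hd b a)
    (hsub : ∀ a b, lead a b → hd a b)
    (hwf : ¬ ∃ f : ℕ → A, ∀ n,
      Relation.Comp ar (Relation.ReflTransGen lead) (f n) (f (n + 1)))
    (hi : ∀ a b c, ar b a → ar b c →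
      ∃ u v, Relation.ReflTransGen (fun x y => ar x y ∨ lead x y) a u ∧
        Relation.ReflGen hd u v ∧
        Relation.ReflTransGen (fun x y => ar x y ∨ lead x y) c v)
    (hii : ∀ a b c, hd a b → ar b c →
      ∃ u u' v, ar a u ∧
        Relation.ReflTransGen (fun x y => ar x y ∨ lead x y) u u' ∧
        Relation.ReflGen hd u' v ∧
        Relation.ReflTransGen (fun x y => ar x y ∨ lead x y) c v) :
    ∀ (M : Multiset (A × Bool)) (a b : A) (C : Conv ar hd a b), C.mu = M →
      ∃ C' : Conv ar hd a b, C'.valley ∧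
        ReflTransGen (MLT (BLT ar lead)) C'.mu M := by
  have wfm : WellFounded (TransGen (MLT (BLT ar lead))) :=
    (mlt_wf (blt_wf ar lead hwf)).transGen
  intro M
  refine wfm.induction
    (C := fun M => ∀ (a b : A) (C : Conv ar hd a b), C.mu = M →
      ∃ C' : Conv ar hd a b, C'.valley ∧
        ReflTransGen (MLT (BLT ar lead)) C'.mu M) M ?_
  clear M
  intro M IH a b C hC
  subst hC
  cases C with
  | nil a => exact ⟨.nil a, by simp [Conv.valley], .refl⟩
  | @consF _ c _ h t =>
    have hstep : TransGen (MLT (BLT ar lead)) t.mu ((Conv.consF h t).mu) :=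
      TransGen.single ⟨(a, false), 0, t.mu, by simp [Conv.mu], (zero_add _).symm, by simp⟩
    obtain ⟨V, hV, hVle⟩ := IH t.mu hstep c b t rfl
    exact ⟨.consF h V, by simpa [Conv.valley] using hV,
      by simpa [Conv.mu] using rtg_mlt_cons ((a : A), false) hVle⟩
  | @consE _ c _ h t =>
    have hstep : TransGen (MLT (BLT ar lead)) t.mu ((Conv.consE h t).mu) := by
      refine TransGen.head ⟨(c, true), 0, t.mu, rfl, (zero_add _).symm, by simp⟩ ?_
      exact TransGen.single
        ⟨(a, true), 0, (c, true) ::ₘ t.mu, by simp [Conv.mu], (zero_add _).symm, by simp⟩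
    obtain ⟨V, hV, hVle⟩ := IH t.mu hstep c b t rfl
    cases V with
    | nil =>
      refine ⟨.consE h (.nil _), by simp [Conv.valley, Conv.isEB], ?_⟩
      simpa [Conv.mu] using
        rtg_mlt_cons ((a : A), true) (rtg_mlt_cons ((b : A), true) hVle)
    | @consB _ d _ h2 t' =>
      refine ⟨.consE h (.consB h2 t'), by simpa [Conv.valley, Conv.isEB] using hV, ?_⟩
      simpa [Conv.mu] using
        rtg_mlt_cons ((a : A), true) (rtg_mlt_cons ((c : A), true) hVle)
    | @consE _ d _ h2 t' =>
      refine ⟨.consE h (.consE h2 t'), by simpa [Conv.valley, Conv.isEB] using hV, ?_⟩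
      simpa [Conv.mu] using
        rtg_mlt_cons ((a : A), true) (rtg_mlt_cons ((c : A), true) hVle)
    | @consF _ d _ h2 t' =>
      obtain ⟨u, u', v, h3, h4, h5, h6⟩ := hii a c d h h2
      obtain ⟨F1, hF1⟩ := ofFwd (ar := ar) (hd := hd) hsub h4
      obtain ⟨F2, hF2⟩ := ofE (ar := ar) (hd := hd) h5
      obtain ⟨F3, hF3⟩ := ofBwd (ar := ar) (hd := hd) hsym hsub h6
      set C₂ : Conv ar hd a b := .consF h3 (F1.append (F2.append (F3.append t'))) with hC₂
      have hmu2 : C₂.mu = ((a, false) ::ₘ (F1.mu + F2.mu + F3.mu)) + t'.mu := by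
        simp only [hC₂, Conv.mu, Conv.mu_append, Multiset.cons_add, add_assoc]
      have hXZ : (((a, true) ::ₘ (c, true) ::ₘ {(c, false)}) + t'.mu : Multiset (A × Bool))
          = (a, true) ::ₘ (c, true) ::ₘ (Conv.consF h2 t').mu := by
        simp [Conv.mu, Multiset.cons_add, Multiset.singleton_add]
      have hdm : TransGen (MLT (BLT ar lead)) C₂.mu
          ((a, true) ::ₘ (c, true) ::ₘ (Conv.consF h2 t').mu) := by
        rw [hmu2, ← hXZ]
        refine mlt_dm _ (by simp) _ _ ?_
        intro y hy
        rcases Multiset.mem_cons.mp hy with rfl | hy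
        · exact ⟨(a, true), by simp, blt_snd⟩
        obtain ⟨y1, y2⟩ := y
        rcases Multiset.mem_add.mp hy with hy | hy
        · rcases Multiset.mem_add.mp hy with hy | hy
          · exact ⟨(a, true), by simp, blt_fst (below h3 (hF1 _ hy))⟩
          · rcases hF2 _ hy with h' | h'
            · exact ⟨(a, true), by simp, blt_fst (by
                simp only at h'; rw [h']; exact below h3 h4)⟩
            · exact ⟨(c, true), by simp, blt_fst (by
                simp only at h'; rw [h']; exact below h2 h6)⟩
        · exact ⟨(c, true), by simp, blt_fst (below h2 (hF3 _ hy))⟩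
      have hle2 : ReflTransGen (MLT (BLT ar lead))
          ((a, true) ::ₘ (c, true) ::ₘ (Conv.consF h2 t').mu) ((Conv.consE h t).mu) := by
        simpa [Conv.mu] using
          rtg_mlt_cons ((a : A), true) (rtg_mlt_cons ((c : A), true) hVle)
      have hlt : TransGen (MLT (BLT ar lead)) C₂.mu ((Conv.consE h t).mu) :=
        TransGen.trans_left hdm hle2
      obtain ⟨C₃, hv3, hle3⟩ := IH C₂.mu hlt a b C₂ rfl
      exact ⟨C₃, hv3, hle3.trans hlt.to_reflTransGen⟩
  | @consB _ c _ h t =>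
    have hstep : TransGen (MLT (BLT ar lead)) t.mu ((Conv.consB h t).mu) :=
      TransGen.single ⟨(c, false), 0, t.mu, by simp [Conv.mu], (zero_add _).symm, by simp⟩
    obtain ⟨V, hV, hVle⟩ := IH t.mu hstep c b t rfl
    cases V with
    | nil =>
      refine ⟨.consB h (.nil _), by simp [Conv.valley, Conv.allB], ?_⟩
      simpa [Conv.mu] using rtg_mlt_cons ((b : A), false) hVle
    | @consB _ d _ h2 t' =>
      refine ⟨.consB h (.consB h2 t'), by simpa [Conv.valley, Conv.allB] using hV, ?_⟩
      simpa [Conv.mu] using rtg_mlt_cons ((c : A), false) hVle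
    | @consF _ d _ h2 t' =>
      obtain ⟨u, v, h4, h5, h6⟩ := hi a c d h h2
      obtain ⟨F1, hF1⟩ := ofFwd (ar := ar) (hd := hd) hsub h4
      obtain ⟨F2, hF2⟩ := ofE (ar := ar) (hd := hd) h5
      obtain ⟨F3, hF3⟩ := ofBwd (ar := ar) (hd := hd) hsym hsub h6
      set C₂ : Conv ar hd a b := F1.append (F2.append (F3.append t')) with hC₂
      have hmu2 : C₂.mu = (F1.mu + F2.mu + F3.mu) + t'.mu := by
        simp only [hC₂, Conv.mu_append, add_assoc]
      have hXZ : (((c, false) ::ₘ {(c, false)}) + t'.mu : Multiset (A × Bool))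
          = (c, false) ::ₘ (Conv.consF h2 t').mu := by
        simp [Conv.mu, Multiset.cons_add, Multiset.singleton_add]
      have hdm : TransGen (MLT (BLT ar lead)) C₂.mu
          ((c, false) ::ₘ (Conv.consF h2 t').mu) := by
        rw [hmu2, ← hXZ]
        refine mlt_dm _ (by simp) _ _ ?_
        intro y hy
        obtain ⟨y1, y2⟩ := y
        rcases Multiset.mem_add.mp hy with hy | hy
        · rcases Multiset.mem_add.mp hy with hy | hy
          · exact ⟨(c, false), by simp, blt_fst (below h (hF1 _ hy))⟩
          · rcases hF2 _ hy with h' | h'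
            · exact ⟨(c, false), by simp, blt_fst (by
                simp only at h'; rw [h']; exact below h h4)⟩
            · exact ⟨(c, false), by simp, blt_fst (by
                simp only at h'; rw [h']; exact below h2 h6)⟩
        · exact ⟨(c, false), by simp, blt_fst (below h2 (hF3 _ hy))⟩
      have hle2 : ReflTransGen (MLT (BLT ar lead))
          ((c, false) ::ₘ (Conv.consF h2 t').mu) ((Conv.consB h t).mu) := by
        simpa [Conv.mu] using rtg_mlt_cons ((c : A), false) hVle
      have hlt : TransGen (MLT (BLT ar lead)) C₂.mu ((Conv.consB h t).mu) :=
        TransGen.trans_left hdm hle2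
      obtain ⟨C₃, hv3, hle3⟩ := IH C₂.mu hlt a b C₂ rfl
      exact ⟨C₃, hv3, hle3.trans hlt.to_reflTransGen⟩
    | @consE _ d _ h2 t' =>
      obtain ⟨u, u', v, h3, h4, h5, h6⟩ := hii d c a (hsym _ _ h2) h
      obtain ⟨F1, hF1⟩ := ofFwd (ar := ar) (hd := hd) hsub h6
      obtain ⟨F2, hF2⟩ := ofErev (ar := ar) hsym h5
      obtain ⟨F3, hF3⟩ := ofBwd (ar := ar) (hd := hd) hsym hsub h4
      set C₂ : Conv ar hd a b := F1.append (F2.append (F3.append (.consB h3 t'))) with hC₂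
      have hmu2 : C₂.mu = (F1.mu + F2.mu + F3.mu + {(d, false)}) + t'.mu := by
        simp only [hC₂, Conv.mu_append, Conv.mu, ← Multiset.singleton_add, add_assoc]
      have hXZ : (((c, false) ::ₘ (c, true) ::ₘ {(d, true)}) + t'.mu : Multiset (A × Bool))
          = (c, false) ::ₘ (Conv.consE h2 t').mu := by
        simp [Conv.mu, Multiset.cons_add, Multiset.singleton_add]
      have hdm : TransGen (MLT (BLT ar lead)) C₂.mu
          ((c, false) ::ₘ (Conv.consE h2 t').mu) := by
        rw [hmu2, ← hXZ]
        refine mlt_dm _ (by simp) _ _ ?_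
        intro y hy
        rcases Multiset.mem_add.mp hy with hy | hy
        · obtain ⟨y1, y2⟩ := y
          rcases Multiset.mem_add.mp hy with hy | hy
          · rcases Multiset.mem_add.mp hy with hy | hy
            · exact ⟨(c, false), by simp, blt_fst (below h (hF1 _ hy))⟩
            · rcases hF2 _ hy with h' | h'
              · exact ⟨(d, true), by simp, blt_fst (by
                  simp only at h'; rw [h']; exact below h3 h4)⟩
              · exact ⟨(c, false), by simp, blt_fst (by
                  simp only at h'; rw [h']; exact below h h6)⟩
          · exact ⟨(d, true), by simp, blt_fst (below h3 (hF3 _ hy))⟩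
        · have : y = (d, false) := by simpa using hy
          subst this
          exact ⟨(d, true), by simp, blt_snd⟩
      have hle2 : ReflTransGen (MLT (BLT ar lead))
          ((c, false) ::ₘ (Conv.consE h2 t').mu) ((Conv.consB h t).mu) := by
        simpa [Conv.mu] using rtg_mlt_cons ((c : A), false) hVle
      have hlt : TransGen (MLT (BLT ar lead)) C₂.mu ((Conv.consB h t).mu) :=
        TransGen.trans_left hdm hle2
      obtain ⟨C₃, hv3, hle3⟩ := IH C₂.mu hlt a b C₂ rfl
      exact ⟨C₃, hv3, hle3.trans hlt.to_reflTransGen⟩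

end Main
end CRMAux

/-- Corollary 2.5.  `hd` is `⊢⊣`, `ar` is `→`, `lead` is `⤳`; `⇒ = → ∪ ⤳`. -/
theorem crm_criterion_variant {A : Type*} (hd ar lead : A → A → Prop)
    (hsym : ∀ a b, hd a b → hd b a)
    (hsub : ∀ a b, lead a b → hd a b)
    (hwf : ¬ ∃ f : ℕ → A, ∀ n,
      Relation.Comp ar (Relation.ReflTransGen lead) (f n) (f (n + 1)))
    (hi : ∀ a b c, ar b a → ar b c →
      ∃ u v, Relation.ReflTransGen (fun x y => ar x y ∨ lead x y) a u ∧
        Relation.ReflGen hd u v ∧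
        Relation.ReflTransGen (fun x y => ar x y ∨ lead x y) c v)
    (hii : ∀ a b c, hd a b → ar b c →
      ∃ u u' v, ar a u ∧
        Relation.ReflTransGen (fun x y => ar x y ∨ lead x y) u u' ∧
        Relation.ReflGen hd u' v ∧
        Relation.ReflTransGen (fun x y => ar x y ∨ lead x y) c v) :
    ∀ a b, Relation.ReflTransGen (fun x y => ar x y ∨ ar y x ∨ hd x y) a b →
      ∃ u v, Relation.ReflTransGen ar a u ∧ Relation.ReflTransGen hd u v ∧
        Relation.ReflTransGen ar b v := by
  intro a b h
  obtain ⟨C⟩ := CRMAux.ofMixed h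
  obtain ⟨C', hv, -⟩ := CRMAux.main hsym hsub hwf hi hii C.mu a b C rfl
  exact CRMAux.Conv.valley_spec C' hv
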